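/- For every real k ≥ 1, the two-sector expansion map F_k : ℍ → ℍ is k-Lipschitz with respect to the hyperbolic metric: dist(F_k(z), F_k(w)) ≤ k · dist(z, w) for all z, w ∈ ℍ. -/

import Mathlib

open UpperHalfPlane Real

lemma sinh_sq_sub' (A B : ℝ) :
    Real.sinh A ^ 2 - Real.sinh B ^ 2 = Real.sinh (A + B) * Real.sinh (A - B) := by
  rw [Real.sinh_add, Real.sinh_sub]
  have hA := Real.cosh_sq A
  have hB := Real.cosh_sq B
  nlinarith [hA, hB]

lemma core_ineq (k v s : ℝ) (hk : 1 ≤ k) (hv : 0 ≤ v) (hvs : v ≤ s) :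
    Real.sinh (k * Real.arsinh v) ^ 2 + (s ^ 2 - v ^ 2) ≤ Real.sinh (k * Real.arsinh s) ^ 2 := by
  set u := Real.arsinh v with hu
  set t := Real.arsinh s with ht
  have hu0 : 0 ≤ u := Real.arsinh_nonneg_iff.2 hv
  have hut : u ≤ t := Real.arsinh_le_arsinh.2 hvs
  have key : Real.sinh (k * t) ^ 2 - Real.sinh (k * u) ^ 2
      = Real.sinh (k * t + k * u) * Real.sinh (k * t - k * u) := sinh_sq_sub' _ _
  have key2 : s ^ 2 - v ^ 2 = Real.sinh (t + u) * Real.sinh (t - u) := by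
    have := sinh_sq_sub' t u
    rwa [Real.sinh_arsinh, Real.sinh_arsinh] at this
  have h1 : Real.sinh (t + u) ≤ Real.sinh (k * t + k * u) := by
    apply Real.sinh_le_sinh.2; nlinarith
  have h2 : Real.sinh (t - u) ≤ Real.sinh (k * t - k * u) := by
    apply Real.sinh_le_sinh.2; nlinarith
  have n1 : 0 ≤ Real.sinh (t + u) := Real.sinh_nonneg_iff.2 (by linarith)
  have n2 : 0 ≤ Real.sinh (t - u) := Real.sinh_nonneg_iff.2 (by linarith)
  nlinarith [mul_le_mul h1 h2 n2 (le_trans n1 h1)]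

lemma sinh_half_log {y1 y2 : ℝ} (h1 : 0 < y1) (h2 : 0 < y2) :
    Real.sinh ((Real.log y1 - Real.log y2) / 2) = (y1 - y2) / (2 * Real.sqrt (y1 * y2)) := by
  have e1 : Real.exp (Real.log y1 / 2) = Real.sqrt y1 := by
    rw [← Real.log_sqrt h1.le, Real.exp_log (Real.sqrt_pos.2 h1)]
  have e2 : Real.exp (Real.log y2 / 2) = Real.sqrt y2 := by
    rw [← Real.log_sqrt h2.le, Real.exp_log (Real.sqrt_pos.2 h2)]
  have s1 : Real.sqrt y1 * Real.sqrt y1 = y1 := Real.mul_self_sqrt h1.le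
  have s2 : Real.sqrt y2 * Real.sqrt y2 = y2 := Real.mul_self_sqrt h2.le
  have sp1 : (0:ℝ) < Real.sqrt y1 := Real.sqrt_pos.2 h1
  have sp2 : (0:ℝ) < Real.sqrt y2 := Real.sqrt_pos.2 h2
  rw [Real.sinh_eq, Real.sqrt_mul h1.le]
  have : (Real.log y1 - Real.log y2) / 2 = Real.log y1 / 2 - Real.log y2 / 2 := by ring
  rw [this, Real.exp_sub, neg_sub, Real.exp_sub, e1, e2]
  rw [div_sub_div _ _ sp2.ne' sp1.ne', div_div, div_eq_div_iff (by positivity) (by positivity)]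
  linear_combination (2*(Real.sqrt y2 * Real.sqrt y1)) * s1
    - (2*(Real.sqrt y1 * Real.sqrt y2)) * s2

lemma sinh_half_log_abs {y1 y2 : ℝ} (h1 : 0 < y1) (h2 : 0 < y2) :
    Real.sinh (|Real.log y1 - Real.log y2| / 2) = |y1 - y2| / (2 * Real.sqrt (y1 * y2)) := by
  rcases le_total y2 y1 with h | h
  · rw [abs_of_nonneg (by nlinarith [Real.log_le_log h2 h] : (0:ℝ) ≤ Real.log y1 - Real.log y2),
      abs_of_nonneg (by linarith : (0:ℝ) ≤ y1 - y2), sinh_half_log h1 h2]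
  · rw [abs_of_nonpos (by nlinarith [Real.log_le_log h1 h] : Real.log y1 - Real.log y2 ≤ 0),
      abs_of_nonpos (by linarith : y1 - y2 ≤ 0)]
    have e : -(Real.log y1 - Real.log y2) / 2 = (Real.log y2 - Real.log y1) / 2 := by ring
    rw [e, mul_comm y1 y2, sinh_half_log h2 h1]
    ring

lemma arsinh_half_abs {y1 y2 : ℝ} (h1 : 0 < y1) (h2 : 0 < y2) :
    Real.arsinh (|y1 - y2| / (2 * Real.sqrt (y1 * y2))) = |Real.log y1 - Real.log y2| / 2 := by
  rw [← sinh_half_log_abs h1 h2, Real.arsinh_sinh]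


noncomputable def mobC (a b c d : ℝ) (z : ℂ) : ℂ := (a * z + b) / (c * z + d)

lemma mobC_im (a b c d : ℝ) (z : ℂ) :
    (mobC a b c d z).im = (a * d - b * c) * z.im / Complex.normSq (c * z + d) := by
  simp only [mobC, Complex.div_im, Complex.add_im, Complex.add_re, Complex.mul_im, Complex.mul_re,
    Complex.ofReal_re, Complex.ofReal_im, Complex.normSq_apply]
  ring

lemma mob_denom_ne (a b c d : ℝ) (h : 0 < a * d - b * c) {z : ℂ} (hz : z.im ≠ 0) :
    ((c : ℂ) * z + d) ≠ 0 := by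
  intro H
  have h1 : c * z.im = 0 := by
    have := congrArg Complex.im H
    simpa using this
  have hc : c = 0 := by
    rcases mul_eq_zero.1 h1 with h' | h'
    · exact h'
    · exact absurd h' hz
  have hd : d = 0 := by
    have := congrArg Complex.re H
    rw [hc] at this
    simpa using this
  rw [hc, hd] at h
  simp at h

noncomputable def mobH (a b c d : ℝ) (h : 0 < a * d - b * c) (z : ℍ) : ℍ :=
  ⟨mobC a b c d z, by
    rw [mobC_im]
    exact div_pos (mul_pos h (by simpa using z.im_pos))
      (Complex.normSq_pos.2 (mob_denom_ne a b c d h (by simpa using z.im_pos.ne')))⟩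

lemma mobH_coe (a b c d : ℝ) (h : 0 < a * d - b * c) (z : ℍ) :
    (mobH a b c d h z : ℂ) = mobC a b c d z := rfl

lemma mobH_im (a b c d : ℝ) (h : 0 < a * d - b * c) (z : ℍ) :
    (mobH a b c d h z).im = (a * d - b * c) * z.im / Complex.normSq (c * z + d) := by
  have : (mobH a b c d h z).im = (mobC a b c d z).im := rfl
  rw [this, mobC_im]
  rfl

lemma mobC_sub (a b c d : ℝ) {z w : ℂ} (hz : ((c : ℂ) * z + d) ≠ 0) (hw : ((c : ℂ) * w + d) ≠ 0) :
    mobC a b c d z - mobC a b c d w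
      = (a * d - b * c) * (z - w) / (((c : ℂ) * z + d) * ((c : ℂ) * w + d)) := by
  unfold mobC
  rw [div_sub_div _ _ hz hw]
  congr 1
  ring

lemma half_arg_sq (z w : ℍ) :
    (dist (z : ℂ) w / (2 * Real.sqrt (z.im * w.im))) ^ 2
      = Complex.normSq ((z : ℂ) - w) / (4 * (z.im * w.im)) := by
  rw [div_pow, mul_pow, Real.sq_sqrt (by positivity), Complex.dist_eq, Complex.sq_norm]
  norm_num

lemma mobH_dist (a b c d : ℝ) (h : 0 < a * d - b * c) (z w : ℍ) :
    dist (mobH a b c d h z) (mobH a b c d h w) = dist z w := by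
  have hz : ((c : ℂ) * z + d) ≠ 0 := mob_denom_ne a b c d h (by simpa using z.im_pos.ne')
  have hw : ((c : ℂ) * w + d) ≠ 0 := mob_denom_ne a b c d h (by simpa using w.im_pos.ne')
  have nz : Complex.normSq ((c : ℂ) * z + d) ≠ 0 := by
    simpa [Complex.normSq_eq_zero] using hz
  have nw : Complex.normSq ((c : ℂ) * w + d) ≠ 0 := by
    simpa [Complex.normSq_eq_zero] using hw
  have e1 : Complex.normSq ((mobH a b c d h z : ℂ) - mobH a b c d h w)
      = (a * d - b * c) ^ 2 * Complex.normSq ((z : ℂ) - w)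
        / (Complex.normSq ((c : ℂ) * z + d) * Complex.normSq ((c : ℂ) * w + d)) := by
    rw [mobH_coe, mobH_coe, mobC_sub a b c d hz hw, map_div₀, map_mul, map_mul]
    rw [show ((a:ℂ) * d - b * c) = ((a * d - b * c : ℝ) : ℂ) by push_cast; ring,
      Complex.normSq_ofReal]
    ring
  have key : (dist ((mobH a b c d h z) : ℂ) (mobH a b c d h w)
        / (2 * Real.sqrt ((mobH a b c d h z).im * (mobH a b c d h w).im))) ^ 2
      = (dist (z : ℂ) w / (2 * Real.sqrt (z.im * w.im))) ^ 2 := by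
    rw [half_arg_sq, half_arg_sq, e1, mobH_im, mobH_im]
    have hD : a * d - b * c ≠ 0 := h.ne'
    have hzi : z.im ≠ 0 := z.im_pos.ne'
    have hwi : w.im ≠ 0 := w.im_pos.ne'
    rw [div_eq_div_iff (by positivity) (by positivity)]
    field_simp
  have h1 : (0:ℝ) ≤ dist ((mobH a b c d h z) : ℂ) (mobH a b c d h w)
      / (2 * Real.sqrt ((mobH a b c d h z).im * (mobH a b c d h w).im)) := by positivity
  have h2 : (0:ℝ) ≤ dist (z : ℂ) w / (2 * Real.sqrt (z.im * w.im)) := by positivity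
  have harg : dist ((mobH a b c d h z) : ℂ) (mobH a b c d h w)
        / (2 * Real.sqrt ((mobH a b c d h z).im * (mobH a b c d h w).im))
      = dist (z : ℂ) w / (2 * Real.sqrt (z.im * w.im)) := by
    rw [← Real.sqrt_sq h1, key, Real.sqrt_sq h2]
  rw [UpperHalfPlane.dist_eq, UpperHalfPlane.dist_eq, harg]

lemma mob_left_inv (a b c d : ℝ) (h : 0 < a * d - b * c) {z : ℂ} (hz : ((c : ℂ) * z + d) ≠ 0) :
    mobC d (-b) (-c) a (mobC a b c d z) = z := by
  have hq : ((-c : ℝ) : ℂ) * mobC a b c d z + a = (a * d - b * c) / ((c : ℂ) * z + d) := by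
    unfold mobC
    rw [eq_div_iff hz, add_mul, mul_assoc, div_mul_cancel₀ _ hz]
    push_cast
    ring
  have hD : ((a : ℂ) * d - b * c) ≠ 0 := by
    have h2 : ((a * d - b * c : ℝ) : ℂ) ≠ 0 := by exact_mod_cast h.ne'
    push_cast at h2
    exact h2
  have hne : ((-c : ℝ) : ℂ) * mobC a b c d z + a ≠ 0 := by
    rw [hq]
    exact div_ne_zero hD hz
  have heta : mobC a b c d z * ((c : ℂ) * z + d) = (a : ℂ) * z + b := by
    unfold mobC
    exact div_mul_cancel₀ _ hz
  set η := mobC a b c d z with hdef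
  unfold mobC
  rw [div_eq_iff hne]
  push_cast
  linear_combination heta

lemma mob_right_inv (a b c d : ℝ) (h : 0 < a * d - b * c) {z : ℂ}
    (hz : ((-c : ℝ) : ℂ) * z + a ≠ 0) :
    mobC a b c d (mobC d (-b) (-c) a z) = z := by
  have h' : 0 < d * a - (-b) * (-c) := by nlinarith
  have := mob_left_inv d (-b) (-c) a h' (z := z) hz
  simpa [neg_neg] using this


noncomputable def Efun (k y : ℝ) : ℝ := if 1 ≤ y then y ^ k else y

lemma Efun_pos (k : ℝ) {y : ℝ} (hy : 0 < y) : 0 < Efun k y := by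
  unfold Efun; split
  · exact Real.rpow_pos_of_pos hy k
  · exact hy

lemma Efun_ge {k : ℝ} (hk : 1 ≤ k) {y : ℝ} (hy : 0 < y) : y ≤ Efun k y := by
  unfold Efun; split
  · rename_i h1
    calc y = y ^ (1:ℝ) := (Real.rpow_one y).symm
    _ ≤ y ^ k := Real.rpow_le_rpow_of_exponent_le h1 hk
  · exact le_refl y

lemma Efun_le_one (k : ℝ) {y : ℝ} (hy : y ≤ 1) : Efun k y = y := by
  unfold Efun; split
  · rename_i h1
    have : y = 1 := le_antisymm hy h1
    rw [this, Real.one_rpow]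
  · rfl

lemma log_Efun_lip {k : ℝ} (hk : 1 ≤ k) {y1 y2 : ℝ} (h1 : 0 < y1) (h2 : 0 < y2) :
    |Real.log (Efun k y1) - Real.log (Efun k y2)| ≤ k * |Real.log y1 - Real.log y2| := by
  unfold Efun
  by_cases a1 : 1 ≤ y1 <;> by_cases a2 : 1 ≤ y2 <;>
    simp only [a1, a2, if_pos, if_neg, if_true, if_false]
  · rw [Real.log_rpow h1, Real.log_rpow h2, ← mul_sub, abs_mul,
      abs_of_nonneg (by linarith : (0:ℝ) ≤ k)]
  · rw [Real.log_rpow h1]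
    have L1 : 0 ≤ Real.log y1 := Real.log_nonneg a1
    have L2 : Real.log y2 < 0 := Real.log_neg h2 (lt_of_not_ge a2)
    rw [abs_of_nonneg (by nlinarith), abs_of_nonneg (by nlinarith)]
    nlinarith
  · rw [Real.log_rpow h2]
    have L2 : 0 ≤ Real.log y2 := Real.log_nonneg a2
    have L1 : Real.log y1 < 0 := Real.log_neg h1 (lt_of_not_ge a1)
    rw [abs_of_nonpos (by nlinarith), abs_of_nonpos (by nlinarith)]
    nlinarith
  · nlinarith [abs_nonneg (Real.log y1 - Real.log y2)]

noncomputable def gA (k : ℝ) (z : ℍ) : ℍ :=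
  ⟨⟨z.re, Efun k z.im⟩, by simpa using Efun_pos k z.im_pos⟩

lemma gA_re (k : ℝ) (z : ℍ) : (gA k z).re = z.re := rfl
lemma gA_im (k : ℝ) (z : ℍ) : (gA k z).im = Efun k z.im := rfl


lemma gA_lipschitz (k : ℝ) (hk : 1 ≤ k) (z w : ℍ) :
    dist (gA k z) (gA k w) ≤ k * dist z w := by
  have hk0 : (0:ℝ) ≤ k := by linarith
  have hy1 : 0 < z.im := z.im_pos
  have hy2 : 0 < w.im := w.im_pos
  have hE1 : 0 < Efun k z.im := Efun_pos k hy1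
  have hE2 : 0 < Efun k w.im := Efun_pos k hy2
  set S := dist (z:ℂ) w / (2 * Real.sqrt (z.im * w.im)) with hSdef
  set S' := dist ((gA k z):ℂ) (gA k w) / (2 * Real.sqrt ((gA k z).im * (gA k w).im)) with hS'def
  have hS0 : 0 ≤ S := by positivity
  have hS'0 : 0 ≤ S' := by positivity
  -- squares
  have hS2 : S ^ 2 = ((z.re - w.re)^2 + (z.im - w.im)^2) / (4 * (z.im * w.im)) := by
    rw [hSdef, half_arg_sq]
    congr 1
    simp only [Complex.normSq_apply, Complex.sub_re, Complex.sub_im, coe_re, coe_im]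
    ring
  have hS'2 : S' ^ 2 = ((z.re - w.re)^2 + (Efun k z.im - Efun k w.im)^2)
      / (4 * (Efun k z.im * Efun k w.im)) := by
    rw [hS'def, half_arg_sq]
    have h1 : ((gA k z : ℂ)).re = z.re := rfl
    have h2 : ((gA k z : ℂ)).im = Efun k z.im := rfl
    have h3 : ((gA k w : ℂ)).re = w.re := rfl
    have h4 : ((gA k w : ℂ)).im = Efun k w.im := rfl
    rw [gA_im, gA_im]
    congr 1
    simp only [Complex.normSq_apply, Complex.sub_re, Complex.sub_im, h1, h2, h3, h4]
    ring
  set v := |z.im - w.im| / (2 * Real.sqrt (z.im * w.im)) with hvdef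
  have hv0 : 0 ≤ v := by positivity
  have hv2 : v ^ 2 = (z.im - w.im)^2 / (4 * (z.im * w.im)) := by
    rw [hvdef, div_pow, sq_abs, mul_pow, Real.sq_sqrt (by positivity)]
    norm_num
  have hvS : v ≤ S := by
    have hsq : v ^ 2 ≤ S ^ 2 := by
      rw [hv2, hS2]
      gcongr
      nlinarith [sq_nonneg (z.re - w.re)]
    calc v = Real.sqrt (v ^ 2) := (Real.sqrt_sq hv0).symm
    _ ≤ Real.sqrt (S ^ 2) := Real.sqrt_le_sqrt hsq
    _ = S := Real.sqrt_sq hS0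
  have har : Real.arsinh v = |Real.log z.im - Real.log w.im| / 2 := arsinh_half_abs hy1 hy2
  -- vertical bound
  have hvert : (Efun k z.im - Efun k w.im)^2 / (4 * (Efun k z.im * Efun k w.im))
      ≤ Real.sinh (k * Real.arsinh v) ^ 2 := by
    have e1 : (Efun k z.im - Efun k w.im)^2 / (4 * (Efun k z.im * Efun k w.im))
        = Real.sinh (|Real.log (Efun k z.im) - Real.log (Efun k w.im)| / 2) ^ 2 := by
      rw [sinh_half_log_abs hE1 hE2, div_pow, sq_abs, mul_pow, Real.sq_sqrt (by positivity)]
      norm_num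
    rw [e1, har]
    have harg : |Real.log (Efun k z.im) - Real.log (Efun k w.im)| / 2
        ≤ k * (|Real.log z.im - Real.log w.im| / 2) := by
      have := log_Efun_lip hk hy1 hy2
      linarith
    have hnn : 0 ≤ Real.sinh (|Real.log (Efun k z.im) - Real.log (Efun k w.im)| / 2) :=
      Real.sinh_nonneg_iff.2 (by positivity)
    have hmono := Real.sinh_le_sinh.2 harg
    nlinarith
  -- horizontal bound
  have hhor : (z.re - w.re)^2 / (4 * (Efun k z.im * Efun k w.im))
      ≤ (z.re - w.re)^2 / (4 * (z.im * w.im)) := by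
    have hmm : 4 * (z.im * w.im) ≤ 4 * (Efun k z.im * Efun k w.im) := by
      nlinarith [Efun_ge hk hy1, Efun_ge hk hy2]
    exact div_le_div_of_nonneg_left (sq_nonneg _) (by positivity) hmm
  -- core
  have hcore := core_ineq k v S hk hv0 hvS
  have hfinal : S' ^ 2 ≤ Real.sinh (k * Real.arsinh S) ^ 2 := by
    have hsplit : S' ^ 2 = (z.re - w.re)^2 / (4 * (Efun k z.im * Efun k w.im))
        + (Efun k z.im - Efun k w.im)^2 / (4 * (Efun k z.im * Efun k w.im)) := by
      rw [hS'2]; ring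
    have hSv : S ^ 2 - v ^ 2 = (z.re - w.re)^2 / (4 * (z.im * w.im)) := by
      rw [hS2, hv2]; ring
    nlinarith
  have hsinh_nn : 0 ≤ Real.sinh (k * Real.arsinh S) :=
    Real.sinh_nonneg_iff.2 (mul_nonneg hk0 (Real.arsinh_nonneg_iff.2 hS0))
  have hle : S' ≤ Real.sinh (k * Real.arsinh S) := by
    calc S' = Real.sqrt (S' ^ 2) := (Real.sqrt_sq hS'0).symm
    _ ≤ Real.sqrt (Real.sinh (k * Real.arsinh S) ^ 2) := Real.sqrt_le_sqrt hfinal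
    _ = Real.sinh (k * Real.arsinh S) := Real.sqrt_sq hsinh_nn
  have harsinh : Real.arsinh S' ≤ k * Real.arsinh S := by
    have := Real.arsinh_le_arsinh.2 hle
    rwa [Real.arsinh_sinh] at this
  rw [UpperHalfPlane.dist_eq, UpperHalfPlane.dist_eq]
  rw [← hSdef, ← hS'def]
  linarith


/-- Vertical expansion `z ↦ Re z + i·(Im z)^k` (the `k`-expansion map of the horoball
`{Im z ≥ 1}`, extended to all of `ℍ`). -/
noncomputable def vexp (k : ℝ) (z : UpperHalfPlane) : UpperHalfPlane :=
  ⟨⟨z.re, z.im ^ k⟩, by simpa using Real.rpow_pos_of_pos z.im_pos k⟩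

/-- The hyperbolic isometry `z ↦ -1/z` of the upper half-plane. -/
noncomputable def neginv (z : UpperHalfPlane) : UpperHalfPlane :=
  ⟨-((z : ℂ)⁻¹), by
    have hz : (z : ℂ) ≠ 0 := z.ne_zero
    have him : (-((z : ℂ)⁻¹)).im = z.im / Complex.normSq z := by
      simp [Complex.inv_im, UpperHalfPlane.coe_im, neg_div]
    rw [him]
    exact div_pos z.im_pos (Complex.normSq_pos.mpr hz)⟩

/-- The two-sector expansion map `F_k : ℍ → ℍ`: the `k`-expansion map on the horoball
`{Im z ≥ 1}`, its conjugate by `z ↦ -1/z` on the horoball `{|z - i/2| ≤ 1/2}` based at `0`,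
and the identity elsewhere. -/
noncomputable def twoSector (k : ℝ) (z : UpperHalfPlane) : UpperHalfPlane :=
  if 1 ≤ z.im then vexp k z
  else if ‖(z : ℂ) - Complex.I / 2‖ ≤ 1 / 2 then neginv (vexp k (neginv z))
  else z

lemma neginv_eq_mob (z : ℍ) : neginv z = mobH 0 (-1) 1 0 (by norm_num) z := by
  apply UpperHalfPlane.ext
  show -((z : ℂ)⁻¹) = mobC 0 (-1) 1 0 z
  unfold mobC
  push_cast
  rw [zero_mul, zero_add, mul_comm, mul_one, add_zero]
  rw [div_eq_mul_inv, neg_one_mul]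

lemma neginv_dist (z w : ℍ) : dist (neginv z) (neginv w) = dist z w := by
  rw [neginv_eq_mob z, neginv_eq_mob w, mobH_dist]

lemma neginv_neginv (z : ℍ) : neginv (neginv z) = z := by
  apply UpperHalfPlane.ext
  show -((-((z : ℂ)⁻¹))⁻¹) = z
  rw [inv_neg, inv_inv, neg_neg]

lemma neginv_im (z : ℍ) : (neginv z).im = z.im / Complex.normSq z := by
  show (-((z : ℂ)⁻¹)).im = z.im / Complex.normSq z
  simp [Complex.inv_im, UpperHalfPlane.coe_im, neg_div]

lemma normSq_coe (z : ℍ) : Complex.normSq z = z.re ^ 2 + z.im ^ 2 := by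
  simp only [Complex.normSq_apply, coe_re, coe_im]
  ring

lemma mem_B_iff (z : ℍ) :
    ‖(z : ℂ) - Complex.I / 2‖ ≤ 1 / 2 ↔ 1 ≤ (neginv z).im := by
  have hns : 0 < Complex.normSq z := Complex.normSq_pos.2 z.ne_zero
  have habs2 : ‖(z : ℂ) - Complex.I / 2‖ ^ 2 = z.re ^ 2 + (z.im - 1/2) ^ 2 := by
    rw [Complex.sq_norm]
    have hre : ((z : ℂ) - Complex.I / 2).re = z.re := by simp [coe_re]
    have him : ((z : ℂ) - Complex.I / 2).im = z.im - 1/2 := by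
      simp [coe_im]
    rw [Complex.normSq_apply, hre, him]
    ring
  rw [neginv_im, le_div_iff₀ hns, one_mul, normSq_coe]
  have hA : 0 ≤ ‖(z : ℂ) - Complex.I / 2‖ := norm_nonneg _
  constructor
  · intro h
    nlinarith [habs2]
  · intro h
    nlinarith [habs2]

lemma vexp_eq_gA {k : ℝ} {z : ℍ} (h1 : 1 ≤ z.im) : vexp k z = gA k z := by
  apply UpperHalfPlane.ext
  show (⟨z.re, z.im ^ k⟩ : ℂ) = ⟨z.re, Efun k z.im⟩
  unfold Efun
  rw [if_pos h1]

lemma gA_fix {k : ℝ} {z : ℍ} (h : z.im ≤ 1) : gA k z = z := by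
  apply UpperHalfPlane.ext
  show (⟨z.re, Efun k z.im⟩ : ℂ) = z
  apply Complex.ext
  · rfl
  · exact Efun_le_one k h

lemma twoSector_eq (k : ℝ) (z : ℍ) :
    twoSector k z = if 1 ≤ z.im then gA k z else neginv (gA k (neginv z)) := by
  unfold twoSector
  by_cases h1 : 1 ≤ z.im
  · rw [if_pos h1, if_pos h1, vexp_eq_gA h1]
  · rw [if_neg h1, if_neg h1]
    by_cases h2 : ‖(z : ℂ) - Complex.I / 2‖ ≤ 1 / 2
    · rw [if_pos h2, vexp_eq_gA ((mem_B_iff z).1 h2)]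
    · rw [if_neg h2]
      have him : (neginv z).im ≤ 1 := le_of_not_ge (fun h => h2 ((mem_B_iff z).2 h))
      rw [gA_fix him, neginv_neginv]

lemma nH_fix {k : ℝ} {p : ℍ} (hp : p.im = 1) : neginv (gA k (neginv p)) = p := by
  have hnsq : 1 ≤ Complex.normSq p := by
    rw [normSq_coe, hp]
    nlinarith [sq_nonneg p.re]
  have him : (neginv p).im ≤ 1 := by
    rw [neginv_im, hp, div_le_one (by linarith)]
    exact hnsq
  rw [gA_fix him, neginv_neginv]

lemma nH_lipschitz (k : ℝ) (hk : 1 ≤ k) (z w : ℍ) :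
    dist (neginv (gA k (neginv z))) (neginv (gA k (neginv w))) ≤ k * dist z w := by
  rw [neginv_dist]
  calc dist (gA k (neginv z)) (gA k (neginv w)) ≤ k * dist (neginv z) (neginv w) :=
        gA_lipschitz k hk _ _
  _ = k * dist z w := by rw [neginv_dist]


lemma abs_sub_add_abs_sub {a b c : ℝ} (h : b ∈ Set.uIcc a c) :
    |a - b| + |b - c| = |a - c| := by
  rcases Set.mem_uIcc.1 h with ⟨h1, h2⟩ | ⟨h1, h2⟩
  · rw [abs_of_nonpos (by linarith), abs_of_nonpos (by linarith), abs_of_nonpos (by linarith)]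
    ring
  · rw [abs_of_nonneg (by linarith), abs_of_nonneg (by linarith), abs_of_nonneg (by linarith)]
    ring

lemma exists_mid (a b c d : ℝ) (h : 0 < a * d - b * c) (z w : ℍ)
    (hz0 : (mobH a b c d h z).re = 0) (hw0 : (mobH a b c d h w).re = 0)
    (hz1 : 1 ≤ z.im) (hw1 : w.im ≤ 1) :
    ∃ p : ℍ, p.im = 1 ∧ dist z p + dist p w = dist z w := by
  set Y1 := (mobH a b c d h z).im with hY1def
  set Y2 := (mobH a b c d h w).im with hY2def
  have hY1p : 0 < Y1 := (mobH a b c d h z).im_pos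
  have hY2p : 0 < Y2 := (mobH a b c d h w).im_pos
  have hzc : ((mobH a b c d h z) : ℂ) = Complex.I * (Y1 : ℝ) := by
    apply Complex.ext
    · simpa using hz0
    · simp [hY1def]
  have hwc : ((mobH a b c d h w) : ℂ) = Complex.I * (Y2 : ℝ) := by
    apply Complex.ext
    · simpa using hw0
    · simp [hY2def]
  have hac : ∀ Y : ℝ, Y ≠ 0 → 0 < a ^ 2 + c ^ 2 * Y ^ 2 := by
    intro Y hY
    rcases eq_or_ne a 0 with ha | ha
    · have hc : c ≠ 0 := by
        intro hc
        rw [ha, hc] at h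
        simp at h
      have h1 : 0 < c ^ 2 * Y ^ 2 := by
        have := mul_pos (lt_of_le_of_ne (sq_nonneg c) (Ne.symm (pow_ne_zero 2 hc)))
          (lt_of_le_of_ne (sq_nonneg Y) (Ne.symm (pow_ne_zero 2 hY)))
        exact this
      nlinarith [sq_nonneg a]
    · have h1 : 0 < a ^ 2 := lt_of_le_of_ne (sq_nonneg a) (Ne.symm (pow_ne_zero 2 ha))
      nlinarith [sq_nonneg (c * Y)]
  have hnsq : ∀ Y : ℝ, Complex.normSq (((-c : ℝ) : ℂ) * (Complex.I * (Y : ℝ)) + (a : ℝ))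
      = a ^ 2 + c ^ 2 * Y ^ 2 := by
    intro Y
    simp only [Complex.normSq_apply, Complex.add_re, Complex.add_im, Complex.mul_re,
      Complex.mul_im, Complex.I_re, Complex.I_im, Complex.ofReal_re, Complex.ofReal_im]
    ring
  have hdenom_ne : ∀ Y : ℝ, Y ≠ 0 → ((-c : ℝ) : ℂ) * (Complex.I * (Y : ℝ)) + (a : ℝ) ≠ 0 := by
    intro Y hY H
    have h0 : Complex.normSq (((-c : ℝ) : ℂ) * (Complex.I * (Y : ℝ)) + (a : ℝ)) = 0 := by
      rw [H]; simp
    rw [hnsq Y] at h0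
    exact absurd h0 (hac Y hY).ne'
  -- ψ formula
  set ψ : ℝ → ℝ := fun Y => (a * d - b * c) * Y / (a ^ 2 + c ^ 2 * Y ^ 2) with hψdef
  have hψ_im : ∀ Y : ℝ, (mobC d (-b) (-c) a (Complex.I * (Y : ℝ))).im = ψ Y := by
    intro Y
    rw [mobC_im, hnsq Y]
    simp only [hψdef]
    have : (Complex.I * (Y : ℝ)).im = Y := by simp
    rw [this]
    ring_nf
  have hzinv : (z : ℂ) = mobC d (-b) (-c) a (Complex.I * (Y1 : ℝ)) := by
    rw [← hzc, mobH_coe, mob_left_inv a b c d h (mob_denom_ne a b c d h (by simpa using z.im_pos.ne'))]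
  have hwinv : (w : ℂ) = mobC d (-b) (-c) a (Complex.I * (Y2 : ℝ)) := by
    rw [← hwc, mobH_coe, mob_left_inv a b c d h (mob_denom_ne a b c d h (by simpa using w.im_pos.ne'))]
  have hψY1 : ψ Y1 = z.im := by
    rw [← hψ_im Y1, ← hzinv]; rfl
  have hψY2 : ψ Y2 = w.im := by
    rw [← hψ_im Y2, ← hwinv]; rfl
  -- IVT
  have hposInt : ∀ Y ∈ Set.uIcc Y2 Y1, 0 < Y := by
    intro Y hY
    rcases Set.mem_uIcc.1 hY with ⟨h1, _⟩ | ⟨h1, _⟩ <;> linarith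
  have hcont : ContinuousOn ψ (Set.uIcc Y2 Y1) := by
    apply ContinuousOn.div
    · exact (continuous_const.mul continuous_id).continuousOn
    · exact (continuous_const.add (continuous_const.mul (continuous_pow 2))).continuousOn
    · intro Y hY
      exact (hac Y (hposInt Y hY).ne').ne'
  have hmem : (1 : ℝ) ∈ Set.uIcc (ψ Y2) (ψ Y1) := by
    rw [hψY1, hψY2]
    exact Set.mem_uIcc.2 (Or.inl ⟨hw1, hz1⟩)
  obtain ⟨Y0, hY0mem, hY0⟩ := intermediate_value_uIcc hcont hmem
  have hY0p : 0 < Y0 := hposInt Y0 hY0mem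
  -- the point p
  have hpim : (mobC d (-b) (-c) a (Complex.I * (Y0 : ℝ))).im = 1 := by
    rw [hψ_im Y0, hY0]
  set p : ℍ := ⟨mobC d (-b) (-c) a (Complex.I * (Y0 : ℝ)), by rw [hpim]; exact one_pos⟩ with hpdef
  have hp1 : p.im = 1 := hpim
  have hgp : ((mobH a b c d h p) : ℂ) = Complex.I * (Y0 : ℝ) := by
    rw [mobH_coe]
    exact mob_right_inv a b c d h (hdenom_ne Y0 hY0p.ne')
  have hgp_re : (mobH a b c d h p).re = 0 := by
    have := congrArg Complex.re hgp
    simpa using this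
  have hgp_im : (mobH a b c d h p).im = Y0 := by
    have := congrArg Complex.im hgp
    simpa using this
  -- distances
  have hd1 : dist z p = |Real.log Y1 - Real.log Y0| := by
    rw [← mobH_dist a b c d h, dist_of_re_eq (by rw [hz0, hgp_re]), hgp_im, ← hY1def,
      Real.dist_eq]
  have hd2 : dist p w = |Real.log Y0 - Real.log Y2| := by
    rw [← mobH_dist a b c d h, dist_of_re_eq (by rw [hgp_re, hw0]), hgp_im, ← hY2def,
      Real.dist_eq]
  have hd3 : dist z w = |Real.log Y1 - Real.log Y2| := by
    rw [← mobH_dist a b c d h, dist_of_re_eq (by rw [hz0, hw0]), ← hY1def, ← hY2def,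
      Real.dist_eq]
  refine ⟨p, hp1, ?_⟩
  rw [hd1, hd2, hd3]
  apply abs_sub_add_abs_sub
  rcases Set.mem_uIcc.1 hY0mem with ⟨h1, h2⟩ | ⟨h1, h2⟩
  · exact Set.mem_uIcc.2 (Or.inr ⟨(Real.log_le_log_iff hY2p hY0p).2 h1,
      (Real.log_le_log_iff hY0p hY1p).2 h2⟩)
  · exact Set.mem_uIcc.2 (Or.inl ⟨(Real.log_le_log_iff hY1p hY0p).2 h1,
      (Real.log_le_log_iff hY0p hY2p).2 h2⟩)

lemma exists_boundary (z w : ℍ) (hz1 : 1 ≤ z.im) (hw1 : w.im ≤ 1) :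
    ∃ p : ℍ, p.im = 1 ∧ dist z p + dist p w = dist z w := by
  rcases eq_or_ne z.re w.re with hre | hre
  · have hdet : (0:ℝ) < 1 * 1 - (-z.re) * 0 := by norm_num
    apply exists_mid 1 (-z.re) 0 1 hdet z w _ _ hz1 hw1
    · show (mobC 1 (-z.re) 0 1 z).re = 0
      unfold mobC
      simp [coe_re]
    · show (mobC 1 (-z.re) 0 1 w).re = 0
      unfold mobC
      simp [coe_re, ← hre]
  · set m : ℝ := (Complex.normSq z - Complex.normSq w) / (2 * (z.re - w.re)) with hmdef
    have hzm : ((z : ℂ) - m) ≠ 0 := by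
      intro H
      have := congrArg Complex.im H
      simp [coe_im] at this
      exact z.im_pos.ne' this
    set r : ℝ := ‖(z : ℂ) - m‖ with hrdef
    have hrp : 0 < r := norm_pos_iff.mpr hzm
    have hr2 : r ^ 2 = (z.re - m) ^ 2 + z.im ^ 2 := by
      rw [hrdef, Complex.sq_norm, Complex.normSq_apply]
      simp [coe_re, coe_im]
      ring
    have hrw2 : (w.re - m) ^ 2 + w.im ^ 2 = r ^ 2 := by
      rw [hr2]
      have hne : z.re - w.re ≠ 0 := sub_ne_zero.2 hre
      have hm : m * (2 * (z.re - w.re)) = Complex.normSq z - Complex.normSq w := by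
        rw [hmdef, div_mul_cancel₀]
        exact mul_ne_zero two_ne_zero hne
      rw [normSq_coe, normSq_coe] at hm
      nlinarith [hm]
    have hdet : (0:ℝ) < 1 * (m + r) - (r - m) * (-1) := by nlinarith
    apply exists_mid 1 (r - m) (-1) (m + r) hdet z w _ _ hz1 hw1
    · show (mobC 1 (r - m) (-1) (m + r) z).re = 0
      unfold mobC
      rw [Complex.div_re]
      have e1 : ((1:ℝ) * (z:ℂ) + (r - m : ℝ)).re = z.re + (r - m) := by simp [coe_re]
      have e2 : ((1:ℝ) * (z:ℂ) + (r - m : ℝ)).im = z.im := by simp [coe_im]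
      have e3 : (((-1:ℝ)) * (z:ℂ) + (m + r : ℝ)).re = -z.re + (m + r) := by simp [coe_re]
      have e4 : (((-1:ℝ)) * (z:ℂ) + (m + r : ℝ)).im = -z.im := by simp [coe_im]
      rw [e1, e2, e3, e4]
      have : (z.re + (r - m)) * (-z.re + (m + r)) + z.im * (-z.im) = 0 := by nlinarith [hr2]
      rw [← add_div, this, zero_div]
    · show (mobC 1 (r - m) (-1) (m + r) w).re = 0
      unfold mobC
      rw [Complex.div_re]
      have e1 : ((1:ℝ) * (w:ℂ) + (r - m : ℝ)).re = w.re + (r - m) := by simp [coe_re]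
      have e2 : ((1:ℝ) * (w:ℂ) + (r - m : ℝ)).im = w.im := by simp [coe_im]
      have e3 : (((-1:ℝ)) * (w:ℂ) + (m + r : ℝ)).re = -w.re + (m + r) := by simp [coe_re]
      have e4 : (((-1:ℝ)) * (w:ℂ) + (m + r : ℝ)).im = -w.im := by simp [coe_im]
      rw [e1, e2, e3, e4]
      have : (w.re + (r - m)) * (-w.re + (m + r)) + w.im * (-w.im) = 0 := by nlinarith [hrw2]
      rw [← add_div, this, zero_div]

/-- For every `k ≥ 1`, the two-sector expansion map `F_k` is `k`-Lipschitz on the whole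
hyperbolic plane. -/
theorem twoSector_lipschitz (k : ℝ) (hk : 1 ≤ k) :
    ∀ z w : UpperHalfPlane,
      dist (twoSector k z) (twoSector k w) ≤ k * dist z w := by
  have key : ∀ z w : ℍ, 1 ≤ z.im → ¬ 1 ≤ w.im →
      dist (gA k z) (neginv (gA k (neginv w))) ≤ k * dist z w := by
    intro z w hz hw
    obtain ⟨p, hp1, hsum⟩ := exists_boundary z w hz (le_of_not_ge hw)
    have h1 : dist (gA k z) (gA k p) ≤ k * dist z p := gA_lipschitz k hk z p
    have h2 : dist (neginv (gA k (neginv p))) (neginv (gA k (neginv w))) ≤ k * dist p w :=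
      nH_lipschitz k hk p w
    have hfix1 : gA k p = p := gA_fix (le_of_eq hp1)
    have hfix2 : neginv (gA k (neginv p)) = p := nH_fix hp1
    calc dist (gA k z) (neginv (gA k (neginv w)))
        ≤ dist (gA k z) (gA k p)
          + dist (neginv (gA k (neginv p))) (neginv (gA k (neginv w))) := by
          rw [hfix1, hfix2]
          exact dist_triangle _ _ _
    _ ≤ k * dist z p + k * dist p w := add_le_add h1 h2
    _ = k * dist z w := by rw [← hsum]; ring
  intro z w
  rw [twoSector_eq, twoSector_eq]
  by_cases hz : 1 ≤ z.im <;> by_cases hw : 1 ≤ w.im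
  · rw [if_pos hz, if_pos hw]
    exact gA_lipschitz k hk z w
  · rw [if_pos hz, if_neg hw]
    exact key z w hz hw
  · rw [if_neg hz, if_pos hw, dist_comm, dist_comm z w]
    exact key w z hw hz
  · rw [if_neg hz, if_neg hw]
    exact nH_lipschitz k hk z w
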